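/- Let $S = K[x_1,\ldots,x_n]$ and let $I \subset S$ be an $\mathfrak{m}$-primary lexsegment ideal with $\dim_K (S/I)_1 \le 2$. Then $S/I$ has the strong Lefschetz property: there is a linear form $l$ such that multiplication by $l^k$ from $(S/I)_j$ to $(S/I)_{j+k}$ has maximal rank for all $j \ge 0$ and $k \ge 1$. -/

import Mathlib

open MvPolynomial

variable {K : Type*} [Field K] {n : ℕ}

/-- The total degree of an exponent vector. -/
def mdeg {n : ℕ} (m : Fin n →₀ ℕ) : ℕ := m.sum fun _ e => e

/-- `I` is a monomial ideal: it contains every monomial of each of its elements. -/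
def IsMonomialIdeal (I : Ideal (MvPolynomial (Fin n) K)) : Prop :=
  ∀ f ∈ I, ∀ m ∈ f.support, (monomial m (1 : K)) ∈ I

/-- `I` is stable: for every monomial `u ∈ I` with largest dividing variable `x_k`,
and every `i ≤ k`, the monomial `(x_i / x_k) * u` lies in `I`. -/
def IsStableIdeal (I : Ideal (MvPolynomial (Fin n) K)) : Prop :=
  ∀ m : Fin n →₀ ℕ, (monomial m (1 : K)) ∈ I →
    ∀ k i : Fin n, m k ≠ 0 → (∀ k', k < k' → m k' = 0) → i ≤ k →
      (monomial (m + Finsupp.single i 1 - Finsupp.single k 1) (1 : K)) ∈ I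

/-- `I` is strongly stable: for every monomial `u ∈ I`, every variable `x_k` dividing `u`
and every `i ≤ k`, the monomial `(x_i / x_k) * u` lies in `I`. -/
def IsStronglyStableIdeal (I : Ideal (MvPolynomial (Fin n) K)) : Prop :=
  ∀ m : Fin n →₀ ℕ, (monomial m (1 : K)) ∈ I →
    ∀ k i : Fin n, m k ≠ 0 → i ≤ k →
      (monomial (m + Finsupp.single i 1 - Finsupp.single k 1) (1 : K)) ∈ I

/-- `v <_lex u` for exponent vectors, lex order with `x_1 > x_2 > ⋯ > x_n`. -/
def lexLt {n : ℕ} (v u : Fin n →₀ ℕ) : Prop :=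
  ∃ i : Fin n, (∀ j < i, v j = u j) ∧ v i < u i


lemma mdeg_eq_degree {n : ℕ} (m : Fin n →₀ ℕ) : mdeg m = m.degree := rfl

lemma mdeg_add {n : ℕ} (a b : Fin n →₀ ℕ) : mdeg (a + b) = mdeg a + mdeg b := by
  simp [mdeg_eq_degree, Finsupp.degree_eq_weight_one]

lemma mdeg_single {n : ℕ} (i : Fin n) (k : ℕ) : mdeg (Finsupp.single i k) = k := by
  simp [mdeg, Finsupp.sum_single_index]

lemma mdeg_univ {n : ℕ} (m : Fin n →₀ ℕ) : mdeg m = ∑ i : Fin n, m i :=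
  Finsupp.sum_fintype _ _ fun _ => rfl

/-- `I` is a lexsegment ideal. -/
def IsLexsegmentIdeal (I : Ideal (MvPolynomial (Fin n) K)) : Prop :=
  IsMonomialIdeal I ∧
    ∀ u v : Fin n →₀ ℕ, (monomial u (1 : K)) ∈ I → mdeg v = mdeg u → lexLt u v →
      (monomial v (1 : K)) ∈ I

/-- The degree `j` piece of `S/I`, as the image of the degree `j` homogeneous polynomials. -/
noncomputable def Qpiece (I : Ideal (MvPolynomial (Fin n) K)) (j : ℕ) :
    Submodule K (MvPolynomial (Fin n) K ⧸ I) :=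
  (homogeneousSubmodule (Fin n) K j).map (Ideal.Quotient.mkₐ K I).toLinearMap

/-- Multiplication by `g` maps `(S/I)_j` injectively (to `(S/I)_{j'}`). -/
def QInj (I : Ideal (MvPolynomial (Fin n) K)) (g : MvPolynomial (Fin n) K)
    (j _j' : ℕ) : Prop :=
  ∀ f₁ ∈ Qpiece I j, ∀ f₂ ∈ Qpiece I j,
    Ideal.Quotient.mk I g * f₁ = Ideal.Quotient.mk I g * f₂ → f₁ = f₂

/-- Multiplication by `g` maps `(S/I)_j` onto `(S/I)_{j'}`. -/
def QSurj (I : Ideal (MvPolynomial (Fin n) K)) (g : MvPolynomial (Fin n) K)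
    (j j' : ℕ) : Prop :=
  ∀ h ∈ Qpiece I j', ∃ f ∈ Qpiece I j, Ideal.Quotient.mk I g * f = h

/-- Multiplication by `g` from `(S/I)_j` to `(S/I)_{j'}` has maximal rank. -/
def MulMaxRank (I : Ideal (MvPolynomial (Fin n) K)) (g : MvPolynomial (Fin n) K)
    (j j' : ℕ) : Prop :=
  QInj I g j j' ∨ QSurj I g j j'

lemma aux_lex {n : ℕ} (hn : 1 ≤ n) (v w : Fin n →₀ ℕ)
    (hv : ∀ i : Fin n, (i : ℕ) < n - 2 → v i = 0)
    (hw : ∀ i : Fin n, (i : ℕ) < n - 2 → w i = 0)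
    (hd : mdeg v = mdeg w)
    (hlt : w ⟨n - 1, by omega⟩ < v ⟨n - 1, by omega⟩) : lexLt v w := by
  set b : Fin n := ⟨n - 1, by omega⟩ with hb
  rcases Nat.lt_or_ge n 2 with h2 | h2
  · -- n = 1 : contradiction
    interval_cases n
    have h1 : mdeg v = v b := by
      rw [mdeg_univ]; exact Finset.sum_eq_single_of_mem b (Finset.mem_univ _)
        (fun x _ hx => absurd (Subsingleton.elim x b) hx)
    have h2' : mdeg w = w b := by
      rw [mdeg_univ]; exact Finset.sum_eq_single_of_mem b (Finset.mem_univ _)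
        (fun x _ hx => absurd (Subsingleton.elim x b) hx)
    exfalso; omega
  · set a : Fin n := ⟨n - 2, by omega⟩ with ha
    have hab : a ≠ b := by simp [ha, hb, Fin.ext_iff]; omega
    have hsum : ∀ u : Fin n →₀ ℕ, (∀ i : Fin n, (i : ℕ) < n - 2 → u i = 0) →
        mdeg u = u a + u b := by
      intro u hu
      rw [mdeg_univ, ← Finset.sum_subset (Finset.subset_univ {a, b}), Finset.sum_pair hab]
      intro x _ hx
      apply hu
      simp only [Finset.mem_insert, Finset.mem_singleton] at hx
      push_neg at hx
      have h1 : (x : ℕ) ≠ n - 2 := fun h => hx.1 (Fin.ext h)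
      have h2 : (x : ℕ) ≠ n - 1 := fun h => hx.2 (Fin.ext h)
      have := x.isLt
      omega
    have hva : v a < w a := by
      have := hsum v hv
      have := hsum w hw
      omega
    exact ⟨a, fun j hj => by
      rw [hv j (by simpa [ha, Fin.lt_def] using hj), hw j (by simpa [ha, Fin.lt_def] using hj)],
      hva⟩

set_option maxHeartbeats 1000000 in
lemma aux_vars {K : Type*} [Field K] {n : ℕ} (hn : 1 ≤ n)
    (I : Ideal (MvPolynomial (Fin n) K)) (hlex : IsLexsegmentIdeal I)
    (hfd : FiniteDimensional K (MvPolynomial (Fin n) K ⧸ I))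
    (hdim : Module.finrank K (Qpiece I 1) ≤ 2) :
    ∀ m : Fin n →₀ ℕ, (monomial m (1 : K)) ∉ I → ∀ i : Fin n, (i : ℕ) < n - 2 → m i = 0 := by
  intro m hm i hi
  by_contra hne
  -- X i divides the monomial, so X i ∉ I
  have hXi : (monomial (Finsupp.single i 1) (1 : K)) ∉ I := by
    intro h
    apply hm
    have hmm : Finsupp.single i 1 + (m - Finsupp.single i 1) = m := by
      ext j
      simp only [Finsupp.add_apply, Finsupp.tsub_apply, Finsupp.single_apply]
      split_ifs with h
      · subst h; omega
      · omega
    have heq : (monomial m (1 : K)) =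
        (monomial (Finsupp.single i 1) (1 : K)) * (monomial (m - Finsupp.single i 1) (1 : K)) := by
      rw [monomial_mul, one_mul, hmm]
    rw [heq]
    exact Ideal.mul_mem_right _ _ h
  -- variables lex-below X i are also not in I
  have key : ∀ c : Fin n, i < c → (monomial (Finsupp.single c 1) (1 : K)) ∉ I := by
    intro c hc hcI
    apply hXi
    refine hlex.2 _ _ hcI (by rw [mdeg_single, mdeg_single]) ?_
    refine ⟨i, fun j hj => ?_, ?_⟩
    · rw [Finsupp.single_apply, Finsupp.single_apply, if_neg, if_neg]
      · exact fun h => absurd h (ne_of_gt hj)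
      · exact fun h => absurd h (ne_of_gt (hj.trans hc))
    · simp [Finsupp.single_apply, (ne_of_gt hc)]
  have h3 : 3 ≤ n := by omega
  set a : Fin n := ⟨n - 2, by omega⟩ with ha
  set b : Fin n := ⟨n - 1, by omega⟩ with hb
  have hia : i < a := by rw [Fin.lt_def]; simp only [ha]; omega
  have hib : i < b := by rw [Fin.lt_def]; simp only [hb]; omega
  have hXa := key a hia
  have hXb := key b hib
  -- three linearly independent elements in Qpiece I 1
  have hmem : ∀ c : Fin n, Ideal.Quotient.mk I (X c) ∈ Qpiece I 1 := by
    intro c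
    exact Submodule.mem_map.mpr ⟨X c, isHomogeneous_X K c, rfl⟩
  set v : Fin 3 → Qpiece I 1 :=
    ![⟨_, hmem i⟩, ⟨_, hmem a⟩, ⟨_, hmem b⟩] with hv
  have hli : LinearIndependent K v := by
    rw [Fintype.linearIndependent_iff]
    intro g hg
    have hg' : (g 0) • Ideal.Quotient.mk I (X i) + (g 1) • Ideal.Quotient.mk I (X a)
        + (g 2) • Ideal.Quotient.mk I (X b) = 0 := by
      have := congrArg (Subtype.val) hg
      simpa [hv, Fin.sum_univ_three] using this
    have hp : (g 0) • (X i : MvPolynomial (Fin n) K) + (g 1) • X a + (g 2) • X b ∈ I := by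
      have h1 : (Ideal.Quotient.mkₐ K I) ((g 0) • (X i : MvPolynomial (Fin n) K)
          + (g 1) • X a + (g 2) • X b) = 0 := by
        simp only [map_add, map_smul, Ideal.Quotient.mkₐ_eq_mk]
        exact hg'
      rw [Ideal.Quotient.mkₐ_eq_mk] at h1
      exact Ideal.Quotient.eq_zero_iff_mem.mp h1
    set p : MvPolynomial (Fin n) K := (g 0) • X i + (g 1) • X a + (g 2) • X b with hpdef
    have hco : ∀ c : Fin n, coeff (Finsupp.single c 1) p ≠ 0 →
        (monomial (Finsupp.single c 1) (1 : K)) ∈ I := by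
      intro c hc
      exact hlex.1 p hp _ (by rwa [MvPolynomial.mem_support_iff])
    have hsne : ∀ c d : Fin n, c ≠ d →
        coeff (Finsupp.single c 1) (X d : MvPolynomial (Fin n) K) = 0 := by
      intro c d hcd
      rw [MvPolynomial.X, coeff_monomial, if_neg]
      exact fun h => hcd ((Finsupp.single_left_inj one_ne_zero).mp h.symm)
    have hse : ∀ c : Fin n, coeff (Finsupp.single c 1) (X c : MvPolynomial (Fin n) K) = 1 := by
      intro c; rw [MvPolynomial.X, coeff_monomial, if_pos rfl]
    have hne_ia : i ≠ a := ne_of_lt hia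
    have hne_ib : i ≠ b := ne_of_lt hib
    have hne_ab : a ≠ b := by simp only [ha, hb, ne_eq, Fin.mk.injEq]; omega
    have hg0 : g 0 = 0 := by
      by_contra h0
      refine hXi (hco i ?_)
      rw [hpdef]
      simp only [coeff_add, coeff_smul, hse i, hsne i a hne_ia, hsne i b hne_ib,
        smul_eq_mul, mul_one, mul_zero, add_zero, zero_add, ne_eq]
      exact h0
    have hg1 : g 1 = 0 := by
      by_contra h0
      refine hXa (hco a ?_)
      rw [hpdef]
      simp only [coeff_add, coeff_smul, hse a, hsne a i hne_ia.symm, hsne a b hne_ab,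
        smul_eq_mul, mul_one, mul_zero, add_zero, zero_add, ne_eq]
      exact h0
    have hg2 : g 2 = 0 := by
      by_contra h0
      refine hXb (hco b ?_)
      rw [hpdef]
      simp only [coeff_add, coeff_smul, hse b, hsne b i hne_ib.symm, hsne b a hne_ab.symm,
        smul_eq_mul, mul_one, mul_zero, add_zero, zero_add, ne_eq]
      exact h0
    intro t
    fin_cases t
    · exact hg0
    · exact hg1
    · exact hg2
  have hcard := hli.fintype_card_le_finrank
  simp only [Fintype.card_fin] at hcard
  omega

/-- An `𝔪`-primary lexsegment ideal `I` with `dim_K (S/I)_1 ≤ 2` has the strong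
Lefschetz property: there is a linear form `l` such that multiplication by `l^k` from
`(S/I)_j` to `(S/I)_{j+k}` has maximal rank for all `j ≥ 0`, `k ≥ 1`. -/
theorem stmt_15 [Infinite K] (hn : 1 ≤ n) (I : Ideal (MvPolynomial (Fin n) K))
    (hlex : IsLexsegmentIdeal I)
    (hfd : FiniteDimensional K (MvPolynomial (Fin n) K ⧸ I))
    (hdim : Module.finrank K (Qpiece I 1) ≤ 2) :
    ∃ l ∈ homogeneousSubmodule (Fin n) K 1,
      ∀ j k : ℕ, 1 ≤ k → MulMaxRank I (l ^ k) j (j + k) := by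
  classical
  set b : Fin n := ⟨n - 1, by omega⟩ with hb
  refine ⟨X b, isHomogeneous_X K b, ?_⟩
  intro j k hk
  by_cases P : ∀ u : Fin n →₀ ℕ, mdeg u = j + k → (monomial u (1 : K)) ∉ I → k ≤ u b
  · right
    intro h hh
    obtain ⟨p, hp, rfl⟩ := Submodule.mem_map.mp hh
    rw [mem_homogeneousSubmodule] at hp
    set q : MvPolynomial (Fin n) K :=
      ∑ u ∈ p.support, if (monomial u (1 : K)) ∈ I then 0
        else monomial (u - Finsupp.single b k) (coeff u p) with hq
    have hdegu : ∀ u ∈ p.support, mdeg u = j + k := by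
      intro u hu
      rw [mdeg_eq_degree, Finsupp.degree_eq_weight_one]
      exact hp (MvPolynomial.mem_support_iff.mp hu)
    have hkle : ∀ u ∈ p.support, (monomial u (1 : K)) ∉ I → k ≤ u b := fun u hu h =>
      P u (hdegu u hu) h
    have hsub : ∀ u : Fin n →₀ ℕ, k ≤ u b →
        (u - Finsupp.single b k) + Finsupp.single b k = u := by
      intro u hub
      ext j'
      simp only [Finsupp.add_apply, Finsupp.tsub_apply, Finsupp.single_apply]
      split_ifs with h
      · subst h; omega
      · omega
    have hqhom : q ∈ homogeneousSubmodule (Fin n) K j := by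
      apply Submodule.sum_mem
      intro u hu
      split_ifs with hI
      · exact Submodule.zero_mem _
      · rw [mem_homogeneousSubmodule]
        apply isHomogeneous_monomial
        have h1 := congrArg mdeg (hsub u (hkle u hu hI))
        rw [mdeg_add, mdeg_single] at h1
        have h2 := hdegu u hu
        rw [← mdeg_eq_degree]
        omega
    refine ⟨Ideal.Quotient.mk I q, Submodule.mem_map.mpr ⟨q, hqhom, rfl⟩, ?_⟩
    show Ideal.Quotient.mk I (X b ^ k) * Ideal.Quotient.mk I q = Ideal.Quotient.mk I p
    rw [← map_mul, Ideal.Quotient.eq]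
    have hlkq : (X b : MvPolynomial (Fin n) K) ^ k * q = ∑ u ∈ p.support,
        if (monomial u (1 : K)) ∈ I then 0 else monomial u (coeff u p) := by
      rw [hq, Finset.mul_sum]
      apply Finset.sum_congr rfl
      intro u hu
      split_ifs with hI
      · rw [mul_zero]
      · rw [X_pow_eq_monomial, monomial_mul, one_mul, add_comm, hsub u (hkle u hu hI)]
    have hdiff : (X b : MvPolynomial (Fin n) K) ^ k * q - p =
        ∑ u ∈ p.support, ((if (monomial u (1 : K)) ∈ I then 0 else monomial u (coeff u p))
          - monomial u (coeff u p)) := by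
      rw [hlkq]
      nth_rewrite 3 [as_sum p]
      rw [← Finset.sum_sub_distrib]
    rw [hdiff]
    apply Ideal.sum_mem
    intro u hu
    split_ifs with hI
    · rw [zero_sub]
      apply neg_mem
      have hc : (monomial u (coeff u p)) = C (coeff u p) * monomial u (1 : K) := by
        rw [C_mul_monomial, mul_one]
      rw [hc]
      exact Ideal.mul_mem_left _ _ hI
    · rw [sub_self]
      exact Ideal.zero_mem _
  · left
    push_neg at P
    obtain ⟨w, hwdeg, hwI, hwlt⟩ := P
    have hwsupp := aux_vars hn I hlex hfd hdim w hwI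
    intro f₁ h₁ f₂ h₂ heq
    obtain ⟨p₁, hp₁, rfl⟩ := Submodule.mem_map.mp h₁
    obtain ⟨p₂, hp₂, rfl⟩ := Submodule.mem_map.mp h₂
    have hphom : (p₁ - p₂).IsHomogeneous j :=
      (mem_homogeneousSubmodule _ _).mp (Submodule.sub_mem _ hp₁ hp₂)
    have heq' : Ideal.Quotient.mk I (X b ^ k * p₁) = Ideal.Quotient.mk I (X b ^ k * p₂) := by
      rw [map_mul, map_mul]
      exact heq
    have hmul : (X b : MvPolynomial (Fin n) K) ^ k * (p₁ - p₂) ∈ I := by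
      rw [mul_sub]
      exact Ideal.Quotient.eq.mp heq'
    have hpI : p₁ - p₂ ∈ I := by
      nth_rewrite 1 [as_sum (p₁ - p₂)]
      apply Ideal.sum_mem
      intro u hu
      have hcu : coeff u (p₁ - p₂) ≠ 0 := MvPolynomial.mem_support_iff.mp hu
      have hudeg : mdeg u = j := by
        rw [mdeg_eq_degree, Finsupp.degree_eq_weight_one]
        exact hphom hcu
      have hmono : (monomial u (1 : K)) ∈ I := by
        by_contra hno
        have husupp := aux_vars hn I hlex hfd hdim u hno
        have hvI : (monomial (Finsupp.single b k + u) (1 : K)) ∈ I := by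
          apply hlex.1 _ hmul
          rw [MvPolynomial.mem_support_iff, X_pow_eq_monomial, coeff_monomial_mul]
          simpa using hcu
        have hlt : lexLt (Finsupp.single b k + u) w := by
          apply aux_lex hn _ _ ?_ hwsupp ?_ ?_
          · intro i hi
            rw [Finsupp.add_apply, husupp i hi, Finsupp.single_apply, if_neg, add_zero]
            intro hbi
            have : (b : ℕ) = (i : ℕ) := congrArg Fin.val hbi
            rw [hb] at this
            simp only at this
            omega
          · rw [mdeg_add, mdeg_single, hudeg, hwdeg]
            omega
          · show w b < (Finsupp.single b k + u) b
            rw [Finsupp.add_apply, Finsupp.single_apply, if_pos rfl]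
            omega
        exact hwI (hlex.2 _ _ hvI (by rw [hwdeg, mdeg_add, mdeg_single, hudeg]; omega) hlt)
      have hc : (monomial u (coeff u (p₁ - p₂))) =
          C (coeff u (p₁ - p₂)) * monomial u (1 : K) := by
        rw [C_mul_monomial, mul_one]
      rw [hc]
      exact Ideal.mul_mem_left _ _ hmono
    show Ideal.Quotient.mk I p₁ = Ideal.Quotient.mk I p₂
    exact Ideal.Quotient.eq.mpr hpI
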